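/- Let (X, σ) be a classifying support datum on an essentially small monoidal triangulated category T. Then the universal map f_σ : X → Spc(T), defined by f_σ(x) = {t ∈ T : x ∉ σ(t)}, is surjective. -/

import Mathlib

open CategoryTheory CategoryTheory.Limits CategoryTheory.Pretriangulated
  CategoryTheory.MonoidalCategory TopologicalSpace ZeroObject

universe v u

variable (C : Type u) [Category.{v} C] [HasZeroObject C] [Preadditive C]
  [HasShift C ℤ] [∀ n : ℤ, (shiftFunctor C n).Additive] [Pretriangulated C]
  [HasBinaryBiproducts C] [MonoidalCategory C] [EssentiallySmall.{v} C]
  [∀ X : C, (tensorLeft X).CommShift ℤ] [∀ X : C, (tensorRight X).CommShift ℤ]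
  [∀ X : C, (tensorLeft X).IsTriangulated] [∀ X : C, (tensorRight X).IsTriangulated]

/-- A thick two-sided tensor ideal of a monoidal triangulated category:
a thick (triangulated, closed under direct summands) subcategory, closed under
left and right tensoring by arbitrary objects. -/
structure ThickIdeal : Type (max u v) where
  carrier : Set C
  zero_mem : (0 : C) ∈ carrier
  iso_closed : ∀ {a b : C}, (a ≅ b) → a ∈ carrier → b ∈ carrier
  shift_mem : ∀ (a : C) (n : ℤ), a ∈ carrier → (a⟦n⟧ : C) ∈ carrier
  ext₂ : ∀ T : Triangle C, (T ∈ distTriang C) →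
    T.obj₁ ∈ carrier → T.obj₃ ∈ carrier → T.obj₂ ∈ carrier
  summand_mem : ∀ a b : C, (a ⊞ b) ∈ carrier → a ∈ carrier
  tensor_left_mem : ∀ a x : C, a ∈ carrier → (x ⊗ a) ∈ carrier
  tensor_right_mem : ∀ a x : C, a ∈ carrier → (a ⊗ x) ∈ carrier

namespace ThickIdeal

variable {C}

/-- A thick two-sided ideal is proper if it is not all of `C`. -/
def IsProper (P : ThickIdeal C) : Prop := P.carrier ≠ Set.univ

/-- A prime ideal: a proper thick two-sided ideal `P` such that `I ⊗ J ⊆ P`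
implies `I ⊆ P` or `J ⊆ P` for all thick two-sided ideals `I`, `J`.
(Since `P` is a thick two-sided ideal, `I ⊗ J ⊆ P` is equivalent to all
elementwise tensor products lying in `P`.) -/
def IsPrime (P : ThickIdeal C) : Prop :=
  P.IsProper ∧ ∀ I J : ThickIdeal C,
    (∀ i ∈ I.carrier, ∀ j ∈ J.carrier, (i ⊗ j) ∈ P.carrier) →
      I.carrier ⊆ P.carrier ∨ J.carrier ⊆ P.carrier

/-- A semiprime ideal: an intersection of prime ideals. -/
def IsSemiprime (J : ThickIdeal C) : Prop :=
  ∃ S : Set (ThickIdeal C), (∀ P ∈ S, P.IsPrime) ∧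
    J.carrier = ⋂ P ∈ S, P.carrier

end ThickIdeal

/-- The noncommutative Balmer spectrum: the set of prime thick two-sided ideals. -/
def Spc : Type (max u v) := {P : ThickIdeal C // P.IsPrime}

/-- The topology on `Spc C` generated by declaring the sets
`V(S) = {P : P ∩ S = ∅}` to be closed, i.e. their complements
`U(S) = {P : P ∩ S ≠ ∅}` to be open. -/
instance : TopologicalSpace (Spc C) :=
  generateFrom
    {U : Set (Spc C) | ∃ S : Set C, U = {P : Spc C | (P.1.carrier ∩ S).Nonempty}}

/-- The small noncommutative support of an object. -/
def supp (t : C) : Set (Spc C) := {P : Spc C | t ∉ P.1.carrier}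

/-- The support of a collection of objects. -/
def suppSet (E : Set C) : Set (Spc C) := ⋃ t ∈ E, supp C t

/-- A Thomason subset: a union of closed subsets with quasi-compact complements. -/
def IsThomason (Y : Set (Spc C)) : Prop :=
  ∃ 𝒴 : Set (Set (Spc C)), Y = ⋃₀ 𝒴 ∧ ∀ Z ∈ 𝒴, IsClosed Z ∧ IsCompact Zᶜ

/-- A support datum on `C` with values in the topological space `X`. -/
structure SupportDatum (X : Type*) [TopologicalSpace X] where
  σ : C → Set X
  isClosed_σ : ∀ t : C, IsClosed (σ t)
  σ_zero : σ 0 = ∅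
  σ_unit : σ (𝟙_ C) = Set.univ
  σ_sum : ∀ a b : C, σ (a ⊞ b) = σ a ∪ σ b
  σ_shift : ∀ a : C, σ (a⟦(1 : ℤ)⟧) = σ a
  σ_triangle : ∀ T : Triangle C, (T ∈ distTriang C) →
    σ T.obj₁ ⊆ σ T.obj₂ ∪ σ T.obj₃
  σ_tensor : ∀ a b : C, (⋃ c : C, σ (a ⊗ c ⊗ b)) = σ a ∩ σ b

/-- A specialisation closed subset: a union of closed subsets. -/
def IsSpecClosed {X : Type*} [TopologicalSpace X] (Y : Set X) : Prop :=
  ∃ 𝒴 : Set (Set X), Y = ⋃₀ 𝒴 ∧ ∀ Z ∈ 𝒴, IsClosed Z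

/-- A classifying support datum: the space `X` is noetherian and spectral, and
`Θ(Y) = {t : σ(t) ⊆ Y}` is a bijection from specialisation closed subsets of `X`
to thick two-sided semiprime ideals of `C`, with inverse `J ↦ ⋃_{j ∈ J} σ(j)`. -/
structure ClassifyingSupportDatum (X : Type*) [TopologicalSpace X]
    extends SupportDatum C X where
  noetherian : NoetherianSpace X
  compact : CompactSpace X
  t0 : T0Space X
  basis : IsTopologicalBasis {U : Set X | IsOpen U ∧ IsCompact U}
  qc_inter : ∀ U V : Set X, IsOpen U → IsCompact U → IsOpen V → IsCompact V →
    IsCompact (U ∩ V)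
  sober : QuasiSober X
  theta_semiprime : ∀ Y : Set X, IsSpecClosed Y →
    ∃ J : ThickIdeal C, J.IsSemiprime ∧ J.carrier = {t : C | σ t ⊆ Y}
  theta_leftInv : ∀ Y : Set X, IsSpecClosed Y →
    (⋃ t ∈ {t : C | σ t ⊆ Y}, σ t) = Y
  sigma_specClosed : ∀ J : ThickIdeal C, J.IsSemiprime →
    IsSpecClosed (⋃ j ∈ J.carrier, σ j)
  theta_rightInv : ∀ J : ThickIdeal C, J.IsSemiprime →
    {t : C | σ t ⊆ ⋃ j ∈ J.carrier, σ j} = J.carrier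

/-- The alternating tensor product `r 0 ⊗ c 0 ⊗ r 1 ⊗ c 1 ⊗ ⋯ ⊗ c (n-1) ⊗ r n`. -/
def altTensor : ∀ (n : ℕ), (Fin (n + 1) → C) → (Fin n → C) → C
  | 0, r, _ => r 0
  | n + 1, r, c =>
      altTensor n (fun i => r i.castSucc) (fun i => c i.castSucc) ⊗
        (c (Fin.last n) ⊗ r (Fin.last (n + 1)))

section Aux

variable {C}

theorem ThickIdeal.ext' {I J : ThickIdeal C} (h : I.carrier = J.carrier) : I = J := by
  cases I; cases J; cases h; rfl

namespace AuxNVY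

variable (P : ThickIdeal C)

theorem pull_zero (F : C ⥤ C) [F.Additive] : F.obj 0 ∈ P.carrier :=
  P.iso_closed F.mapZeroObject.symm P.zero_mem

theorem pull_shift (F : C ⥤ C) [F.CommShift ℤ] {t : C} (n : ℤ) (h : F.obj t ∈ P.carrier) :
    F.obj (t⟦n⟧) ∈ P.carrier :=
  P.iso_closed ((F.commShiftIso n).app t).symm (P.shift_mem _ n h)

theorem pull_ext₂ (F : C ⥤ C) [F.CommShift ℤ] [F.IsTriangulated] (T : Triangle C)
    (hT : T ∈ distTriang C) (h1 : F.obj T.obj₁ ∈ P.carrier) (h3 : F.obj T.obj₃ ∈ P.carrier) :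
    F.obj T.obj₂ ∈ P.carrier :=
  P.ext₂ (F.mapTriangle.obj T) (F.map_distinguished T hT) h1 h3

theorem pull_summand (F : C ⥤ C) [F.Additive] {a b : C} (h : F.obj (a ⊞ b) ∈ P.carrier) :
    F.obj a ∈ P.carrier := by
  haveI : PreservesBinaryBiproducts F :=
    preservesBinaryBiproducts_of_preservesBiproducts F
  exact P.summand_mem _ (F.obj b) (P.iso_closed (F.mapBiprod a b) h)

/-- The thick two-sided ideal generated by an object. -/
def genIdeal (a : C) : ThickIdeal C where
  carrier := ⋂ I : {I : ThickIdeal C // a ∈ I.carrier}, I.1.carrier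
  zero_mem := Set.mem_iInter.2 fun I => I.1.zero_mem
  iso_closed e h := Set.mem_iInter.2 fun I => I.1.iso_closed e (Set.mem_iInter.1 h I)
  shift_mem b n h := Set.mem_iInter.2 fun I => I.1.shift_mem b n (Set.mem_iInter.1 h I)
  ext₂ T hT h1 h3 := Set.mem_iInter.2 fun I =>
    I.1.ext₂ T hT (Set.mem_iInter.1 h1 I) (Set.mem_iInter.1 h3 I)
  summand_mem x y h := Set.mem_iInter.2 fun I => I.1.summand_mem x y (Set.mem_iInter.1 h I)
  tensor_left_mem b x h :=
    Set.mem_iInter.2 fun I => I.1.tensor_left_mem b x (Set.mem_iInter.1 h I)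
  tensor_right_mem b x h :=
    Set.mem_iInter.2 fun I => I.1.tensor_right_mem b x (Set.mem_iInter.1 h I)

theorem self_mem_genIdeal (a : C) : a ∈ (genIdeal a).carrier :=
  Set.mem_iInter.2 fun I => I.2

theorem genIdeal_le {a : C} {I : ThickIdeal C} (h : a ∈ I.carrier) :
    (genIdeal a).carrier ⊆ I.carrier := fun _ ht => Set.mem_iInter.1 ht ⟨I, h⟩

/-- `{j | ∀ c, a ⊗ c ⊗ j ∈ P}` is a thick two-sided ideal. -/
def leftIdeal (a : C) : ThickIdeal C where
  carrier := {j | ∀ c : C, (a ⊗ c ⊗ j) ∈ P.carrier}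
  zero_mem c := pull_zero P (tensorLeft c ⋙ tensorLeft a)
  iso_closed e h c := P.iso_closed ((tensorLeft c ⋙ tensorLeft a).mapIso e) (h c)
  shift_mem b n h c := pull_shift P (tensorLeft c ⋙ tensorLeft a) n (h c)
  ext₂ T hT h1 h3 c := pull_ext₂ P (tensorLeft c ⋙ tensorLeft a) T hT (h1 c) (h3 c)
  summand_mem x y h c := pull_summand P (tensorLeft c ⋙ tensorLeft a) (h c)
  tensor_left_mem j x h c :=
    P.iso_closed (whiskerLeftIso a (α_ c x j)) (h (c ⊗ x))
  tensor_right_mem j x h c :=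
    P.iso_closed ((α_ a (c ⊗ j) x) ≪≫ whiskerLeftIso a (α_ c j x))
      (P.tensor_right_mem _ x (h c))

/-- `{i | ∀ j ∈ B, i ⊗ j ∈ P}` is a thick two-sided ideal when `B` is one. -/
def rightIdeal (B : ThickIdeal C) : ThickIdeal C where
  carrier := {i | ∀ j ∈ B.carrier, (i ⊗ j) ∈ P.carrier}
  zero_mem j _ := pull_zero P (tensorRight j)
  iso_closed e h j hj := P.iso_closed ((tensorRight j).mapIso e) (h j hj)
  shift_mem b n h j hj := pull_shift P (tensorRight j) n (h j hj)
  ext₂ T hT h1 h3 j hj := pull_ext₂ P (tensorRight j) T hT (h1 j hj) (h3 j hj)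
  summand_mem x y h j hj := pull_summand P (tensorRight j) (h j hj)
  tensor_left_mem i x h j hj :=
    P.iso_closed (α_ x i j).symm (P.tensor_left_mem _ x (h j hj))
  tensor_right_mem i x h j hj :=
    P.iso_closed (α_ i x j).symm (h (x ⊗ j) (B.tensor_left_mem j x hj))

theorem prime_tensor {P : ThickIdeal C} (hP : P.IsPrime) {a b : C}
    (h : ∀ c : C, (a ⊗ c ⊗ b) ∈ P.carrier) : a ∈ P.carrier ∨ b ∈ P.carrier := by
  have hbJ : (genIdeal b).carrier ⊆ (leftIdeal P a).carrier := genIdeal_le h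
  have haI : (genIdeal a).carrier ⊆ (rightIdeal P (genIdeal b)).carrier :=
    genIdeal_le (fun j hj => P.iso_closed (whiskerLeftIso a (λ_ j)) (hbJ hj (𝟙_ C)))
  rcases hP.2 (genIdeal a) (genIdeal b) (fun i hi j hj => haI hi j hj) with h' | h'
  · exact Or.inl (h' (self_mem_genIdeal a))
  · exact Or.inr (h' (self_mem_genIdeal b))

theorem unit_not_mem {P : ThickIdeal C} (hP : P.IsProper) : 𝟙_ C ∉ P.carrier := by
  intro h
  exact hP (Set.eq_univ_of_forall fun x =>
    P.iso_closed (ρ_ x) (P.tensor_left_mem _ x h))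

variable {X : Type*} [TopologicalSpace X]

theorem sigma_subset_of_iso (D : SupportDatum C X) {a b : C} (e : a ≅ b) :
    D.σ a ⊆ D.σ b := by
  have hd : Triangle.mk e.hom (0 : b ⟶ 0) (0 : (0 : C) ⟶ a⟦(1 : ℤ)⟧) ∈ distTriang C := by
    refine isomorphic_distinguished _ (contractible_distinguished a) _ ?_
    refine Triangle.isoMk _ _ (Iso.refl a) e.symm (Iso.refl 0) ?_ ?_ ?_
    · exact e.hom_inv_id.trans (Category.comp_id _).symm
    · exact (zero_comp).trans comp_zero.symm
    · exact (isZero_zero C).eq_of_src _ _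
  have := D.σ_triangle _ hd
  simpa [D.σ_zero] using this

theorem sigma_iso (D : SupportDatum C X) {a b : C} (e : a ≅ b) : D.σ a = D.σ b :=
  Set.Subset.antisymm (sigma_subset_of_iso D e) (sigma_subset_of_iso D e.symm)

theorem sigma_tensor_subset (D : SupportDatum C X) (a c b : C) :
    D.σ (a ⊗ c ⊗ b) ⊆ D.σ a ∩ D.σ b := by
  rw [← D.σ_tensor a b]
  exact Set.subset_iUnion (fun c => D.σ (a ⊗ c ⊗ b)) c

end AuxNVY

end Aux

/-- For a classifying support datum `(X, σ)`, the universal map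
`f_σ : X → Spc C`, `f_σ(x) = {t : x ∉ σ(t)}`, is surjective. -/
theorem statement15 {X : Type*} [TopologicalSpace X]
    (D : ClassifyingSupportDatum C X) (f : X → Spc C)
    (hf : ∀ x : X, (f x).1.carrier = {t : C | x ∉ D.σ t}) :
    Function.Surjective f := by
  intro Pp
  obtain ⟨P, hP⟩ := Pp
  haveI := D.noetherian
  have hsem : P.IsSemiprime := ⟨{P}, by simpa using hP, by simp⟩
  have hΘ : {t : C | D.σ t ⊆ ⋃ j ∈ P.carrier, D.σ j} = P.carrier := D.theta_rightInv P hsem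
  set 𝒮 : Set (Closeds X) :=
    {S | ∃ s : C, s ∉ P.carrier ∧ S = ⟨D.σ s, D.isClosed_σ s⟩} with h𝒮
  have hne : 𝒮.Nonempty := ⟨_, 𝟙_ C, AuxNVY.unit_not_mem hP.1, rfl⟩
  obtain ⟨m, hm, hmin⟩ := (wellFounded_lt (α := Closeds X)).has_min 𝒮 hne
  obtain ⟨s₀, hs₀, rfl⟩ := hm
  have key : ∀ t : C, t ∉ P.carrier → D.σ s₀ ⊆ D.σ t := by
    intro t ht
    obtain ⟨c, hc⟩ : ∃ c : C, (s₀ ⊗ c ⊗ t) ∉ P.carrier := by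
      by_contra hall
      push_neg at hall
      rcases AuxNVY.prime_tensor hP hall with h | h
      exacts [hs₀ h, ht h]
    have hsub := AuxNVY.sigma_tensor_subset D.toSupportDatum s₀ c t
    have hmem : (⟨D.σ (s₀ ⊗ c ⊗ t), D.isClosed_σ _⟩ : Closeds X) ∈ 𝒮 := ⟨_, hc, rfl⟩
    have hle : (⟨D.σ (s₀ ⊗ c ⊗ t), D.isClosed_σ _⟩ : Closeds X) ≤
        ⟨D.σ s₀, D.isClosed_σ s₀⟩ :=
      SetLike.coe_subset_coe.1 (fun x hx => (hsub hx).1)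
    have heq : (⟨D.σ (s₀ ⊗ c ⊗ t), D.isClosed_σ _⟩ : Closeds X) =
        ⟨D.σ s₀, D.isClosed_σ s₀⟩ := by
      by_contra hne'
      exact hmin _ hmem (lt_of_le_of_ne hle hne')
    have hsets : D.σ (s₀ ⊗ c ⊗ t) = D.σ s₀ :=
      congrArg (SetLike.coe : Closeds X → Set X) heq
    intro x hx
    have hx' : x ∈ D.σ (s₀ ⊗ c ⊗ t) := by rw [hsets]; exact hx
    exact (hsub hx').2
  have hnotsub : ¬ D.σ s₀ ⊆ ⋃ j ∈ P.carrier, D.σ j := by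
    intro h
    have : s₀ ∈ {t : C | D.σ t ⊆ ⋃ j ∈ P.carrier, D.σ j} := h
    rw [hΘ] at this
    exact hs₀ this
  obtain ⟨x, hx1, hx2⟩ := Set.not_subset.1 hnotsub
  refine ⟨x, ?_⟩
  apply Subtype.ext
  apply ThickIdeal.ext'
  rw [hf x]
  ext t
  simp only [Set.mem_setOf_eq]
  constructor
  · intro hxt
    by_contra ht
    exact hxt (key t ht hx1)
  · intro ht hxt
    exact hx2 (Set.mem_biUnion ht hxt)
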